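/- Define X̂₀(x,p) = ∫₀ˣ 1^dr₀(y,p) dy, where 1^dr₀(y,·) is the dressing of the constant function 1 with respect to n₀(y,·). Under the standing assumptions, for every x > y and every p, R(κ) ≤ (X̂₀(x,p) − X̂₀(y,p))/(x − y) ≤ 1/(1 − κ), where κ = ‖T n₀‖_op and R(κ) = 1 − κ in the fixed-sign case and R(κ) = (1 − 2κ)/(1 − κ) otherwise. Consequently X̂₀(·,p) is strictly increasing, bi-Lipschitz, and a bijection of ℝ, and its inverse X₀(·,p) satisfies 1 − κ ≤ (X₀(x̂,p) − X₀(ŷ,p))/(x̂ − ŷ) ≤ 1/R(κ) for x̂ > ŷ. -/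

import Mathlib

open MeasureTheory

/-- Basic properties of `X̂₀(x,p) = ∫₀ˣ 1^dr₀(y,p) dy` (where `1^dr₀(y,·)`
is the dressing of `1` with respect to `n₀(y,·)`): for `x > y`,
`R(κ) ≤ (X̂₀(x,p) - X̂₀(y,p))/(x-y) ≤ 1/(1-κ)` where `R(κ) = 1-κ` in the fixed-sign case
and `R(κ) = (1-2κ)/(1-κ)` otherwise; hence `X̂₀(·,p)` is strictly increasing and a
bijection of ℝ, and its inverse `X₀(·,p)` satisfies
`1-κ ≤ (X₀(x̂,p)-X₀(ŷ,p))/(x̂-ŷ) ≤ 1/R(κ)` for `x̂ > ŷ`. -/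
theorem stmt_6
    (T : ℝ → ℝ → ℝ) (n₀ : ℝ → ℝ → ℝ) (κ Rκ : ℝ)
    (onedr0 Xhat0 X0 : ℝ → ℝ → ℝ)
    (hT_meas : Measurable (Function.uncurry T))
    (hT_int : ∀ p, Integrable (fun q => T p q))
    (hT_op : ∃ M, ∀ p, (∫ q, |T p q|) ≤ M)
    (hn_meas : Measurable (Function.uncurry n₀))
    (hn_nonneg : ∀ x p, 0 ≤ n₀ x p)
    (hn_bdd : ∃ C, ∀ x p, n₀ x p ≤ C)
    (hsup_meas : Measurable (fun q => ⨆ x, n₀ x q))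
    (hκ : κ = ⨆ p, ∫ q, |T p q| * ⨆ x, n₀ x q)
    (hR : (((∀ p q, 0 ≤ T p q) ∨ (∀ p q, T p q ≤ 0)) ∧ κ < 1 ∧ Rκ = 1 - κ) ∨
          (κ < 1 / 2 ∧ Rκ = (1 - 2 * κ) / (1 - κ)))
    (h1_meas : Measurable (Function.uncurry onedr0))
    (h1_bdd : ∃ C, ∀ y p, |onedr0 y p| ≤ C)
    (h1_eq : ∀ y p, onedr0 y p = 1 + ∫ q, T p q * (n₀ y q * onedr0 y q))
    (hXhat0 : ∀ x p, Xhat0 x p = ∫ y in (0:ℝ)..x, onedr0 y p)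
    (hX0 : ∀ p, Function.LeftInverse (fun xh => X0 xh p) (fun x => Xhat0 x p) ∧
           Function.RightInverse (fun xh => X0 xh p) (fun x => Xhat0 x p)) :
    (∀ p x y, y < x →
      Rκ ≤ (Xhat0 x p - Xhat0 y p) / (x - y) ∧
      (Xhat0 x p - Xhat0 y p) / (x - y) ≤ 1 / (1 - κ)) ∧
    (∀ p, StrictMono (fun x => Xhat0 x p)) ∧
    (∀ p, Function.Bijective (fun x => Xhat0 x p)) ∧
    (∀ p xh yh, yh < xh →
      1 - κ ≤ (X0 xh p - X0 yh p) / (xh - yh) ∧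
      (X0 xh p - X0 yh p) / (xh - yh) ≤ 1 / Rκ) := by
  obtain ⟨Cn, hCn⟩ := hn_bdd
  obtain ⟨C1, hC1⟩ := h1_bdd
  obtain ⟨M, hM⟩ := hT_op
  have hCn0 : 0 ≤ Cn := le_trans (hn_nonneg 0 0) (hCn 0 0)
  have hC10 : 0 ≤ C1 := le_trans (abs_nonneg _) (hC1 0 0)
  set N : ℝ → ℝ := fun q => ⨆ x, n₀ x q with hNdef
  have hN0 : ∀ q, 0 ≤ N q := fun q => Real.iSup_nonneg (fun x => hn_nonneg x q)
  have hNb : ∀ q, BddAbove (Set.range fun x => n₀ x q) := fun q =>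
    ⟨Cn, by rintro _ ⟨x, rfl⟩; exact hCn x q⟩
  have hnN : ∀ x q, n₀ x q ≤ N q := fun x q => le_ciSup (hNb q) x
  have hNC : ∀ q, N q ≤ Cn := fun q => ciSup_le (fun x => hCn x q)
  have hTm : ∀ p, Measurable fun q => T p q := fun p => hT_meas.of_uncurry_left
  have hnm : ∀ y, Measurable fun q => n₀ y q := fun y => hn_meas.of_uncurry_left
  have h1m : ∀ y, Measurable fun q => onedr0 y q := fun y => h1_meas.of_uncurry_left
  have h1m' : ∀ p, Measurable fun y => onedr0 y p := fun p => h1_meas.of_uncurry_right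
  -- integrability facts
  have hgI : ∀ p, Integrable fun q => |T p q| * N q := by
    intro p
    refine ((hT_int p).abs.const_mul Cn).mono'
      ((hTm p).abs.mul hsup_meas).aestronglyMeasurable
      (Filter.Eventually.of_forall fun q => ?_)
    rw [Real.norm_eq_abs, abs_mul, abs_abs, abs_of_nonneg (hN0 q), mul_comm Cn]
    exact mul_le_mul_of_nonneg_left (hNC q) (abs_nonneg _)
  have hgnI : ∀ y p, Integrable fun q => |T p q| * n₀ y q := by
    intro y p
    refine ((hT_int p).abs.const_mul Cn).mono'
      ((hTm p).abs.mul (hnm y)).aestronglyMeasurable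
      (Filter.Eventually.of_forall fun q => ?_)
    rw [Real.norm_eq_abs, abs_mul, abs_abs, abs_of_nonneg (hn_nonneg y q), mul_comm Cn]
    exact mul_le_mul_of_nonneg_left (hCn y q) (abs_nonneg _)
  have hTnI : ∀ y p, Integrable fun q => T p q * n₀ y q := by
    intro y p
    refine ((hT_int p).abs.const_mul Cn).mono'
      ((hTm p).mul (hnm y)).aestronglyMeasurable
      (Filter.Eventually.of_forall fun q => ?_)
    rw [Real.norm_eq_abs, abs_mul, abs_of_nonneg (hn_nonneg y q), mul_comm Cn]
    exact mul_le_mul_of_nonneg_left (hCn y q) (abs_nonneg _)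
  have hfI : ∀ y p, Integrable fun q => T p q * (n₀ y q * onedr0 y q) := by
    intro y p
    refine ((hT_int p).abs.const_mul (Cn * C1)).mono'
      ((hTm p).mul ((hnm y).mul (h1m y))).aestronglyMeasurable
      (Filter.Eventually.of_forall fun q => ?_)
    rw [Real.norm_eq_abs, abs_mul, abs_mul, mul_comm (Cn * C1)]
    have h1 : n₀ y q * |onedr0 y q| ≤ Cn * C1 :=
      mul_le_mul (hCn y q) (hC1 y q) (abs_nonneg _) hCn0
    rw [abs_of_nonneg (hn_nonneg y q)]
    exact mul_le_mul_of_nonneg_left h1 (abs_nonneg _)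
  -- κ facts
  have hκ0 : 0 ≤ κ := by
    rw [hκ]
    exact Real.iSup_nonneg fun p => integral_nonneg fun q => mul_nonneg (abs_nonneg _) (hN0 q)
  have hκ1 : κ < 1 := by rcases hR with ⟨_, h, _⟩ | ⟨h, _⟩ <;> linarith
  have hintκ : ∀ p, (∫ q, |T p q| * N q) ≤ κ := by
    intro p
    have hb : BddAbove (Set.range fun p' => ∫ q, |T p' q| * N q) := by
      refine ⟨Cn * M, ?_⟩
      rintro _ ⟨p', rfl⟩
      calc (∫ q, |T p' q| * N q) ≤ ∫ q, Cn * |T p' q| := by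
            refine integral_mono (hgI p') ((hT_int p').abs.const_mul Cn) fun q => ?_
            rw [mul_comm Cn]
            exact mul_le_mul_of_nonneg_left (hNC q) (abs_nonneg _)
        _ = Cn * ∫ q, |T p' q| := integral_const_mul _ _
        _ ≤ Cn * M := mul_le_mul_of_nonneg_left (hM p') hCn0
    rw [hκ]
    exact le_ciSup hb p
  have hκint : ∀ y p, (∫ q, |T p q| * n₀ y q) ≤ κ := by
    intro y p
    refine le_trans ?_ (hintκ p)
    exact integral_mono (hgnI y p) (hgI p) fun q =>
      mul_le_mul_of_nonneg_left (hnN y q) (abs_nonneg _)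
  have hκn0 : ∀ y p, 0 ≤ ∫ q, |T p q| * n₀ y q := fun y p =>
    integral_nonneg fun q => mul_nonneg (abs_nonneg _) (hn_nonneg y q)
  -- S = sup |onedr0|
  set S : ℝ := ⨆ z : ℝ × ℝ, |onedr0 z.1 z.2| with hSdef
  have hSb : BddAbove (Set.range fun z : ℝ × ℝ => |onedr0 z.1 z.2|) :=
    ⟨C1, by rintro _ ⟨z, rfl⟩; exact hC1 z.1 z.2⟩
  have hS_le : ∀ y p, |onedr0 y p| ≤ S := fun y p => le_ciSup hSb (y, p)
  have hS0 : 0 ≤ S := le_trans (abs_nonneg _) (hS_le 0 0)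
  have habsint : ∀ y p, |∫ q, T p q * (n₀ y q * onedr0 y q)| ≤ κ * S := by
    intro y p
    have h1 : |∫ q, T p q * (n₀ y q * onedr0 y q)| ≤
        ∫ q, |T p q| * (|n₀ y q| * |onedr0 y q|) := by
      simpa [Real.norm_eq_abs, abs_mul] using norm_integral_le_integral_norm
        (fun q => T p q * (n₀ y q * onedr0 y q)) (μ := volume)
    refine h1.trans ?_
    have habsI : Integrable fun q => |T p q| * (|n₀ y q| * |onedr0 y q|) := by
      simpa only [abs_mul] using (hfI y p).abs
    calc (∫ q, |T p q| * (|n₀ y q| * |onedr0 y q|)) ≤ ∫ q, (|T p q| * N q) * S := by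
          refine integral_mono habsI ((hgI p).mul_const S) fun q => ?_
          rw [abs_of_nonneg (hn_nonneg y q), mul_assoc]
          refine mul_le_mul_of_nonneg_left ?_ (abs_nonneg _)
          exact mul_le_mul (hnN y q) (hS_le y q) (abs_nonneg _) (hN0 q)
      _ = (∫ q, |T p q| * N q) * S := integral_mul_const _ _
      _ ≤ κ * S := mul_le_mul_of_nonneg_right (hintκ p) hS0
  have hS_bound : S ≤ 1 / (1 - κ) := by
    have h1 : S ≤ 1 + κ * S := by
      refine ciSup_le fun z => ?_
      rw [h1_eq z.1 z.2]
      calc |1 + ∫ q, T z.2 q * (n₀ z.1 q * onedr0 z.1 q)|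
          ≤ 1 + |∫ q, T z.2 q * (n₀ z.1 q * onedr0 z.1 q)| := by
            simpa using abs_add_le (1:ℝ) _
        _ ≤ 1 + κ * S := by linarith [habsint z.1 z.2]
    rw [le_div_iff₀ (by linarith : (0:ℝ) < 1 - κ)]
    nlinarith
  have hup : ∀ y p, onedr0 y p ≤ 1 / (1 - κ) := fun y p =>
    le_trans (le_abs_self _) ((hS_le y p).trans hS_bound)
  -- lower bound in fixed-sign case: m := inf onedr0 ≥ 0 and onedr0 ≥ 1 - κ
  have hfix : (((∀ p q, 0 ≤ T p q) ∨ (∀ p q, T p q ≤ 0))) →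
      ∀ y p, 1 - κ ≤ onedr0 y p := by
    intro hsign
    set m : ℝ := ⨅ z : ℝ × ℝ, onedr0 z.1 z.2 with hmdef
    have hmb : BddBelow (Set.range fun z : ℝ × ℝ => onedr0 z.1 z.2) :=
      ⟨-C1, by rintro _ ⟨z, rfl⟩; linarith [(abs_le.1 (hC1 z.1 z.2)).1]⟩
    have hm_le : ∀ y p, m ≤ onedr0 y p := fun y p => ciInf_le hmb (y, p)
    have hm0 : 0 ≤ m := by
      by_contra hneg
      push_neg at hneg
      rcases hsign with hTpos | hTneg
      · -- T ≥ 0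
        have key : ∀ y p, 1 + m * κ ≤ onedr0 y p := by
          intro y p
          rw [h1_eq y p]
          have hpt : ∀ q, m * (|T p q| * n₀ y q) ≤ T p q * (n₀ y q * onedr0 y q) := by
            intro q
            have h2 : (T p q * n₀ y q) * m ≤ (T p q * n₀ y q) * onedr0 y q :=
              mul_le_mul_of_nonneg_left (hm_le y q) (mul_nonneg (hTpos p q) (hn_nonneg y q))
            calc m * (|T p q| * n₀ y q) = (T p q * n₀ y q) * m := by
                  rw [abs_of_nonneg (hTpos p q)]; ring
              _ ≤ (T p q * n₀ y q) * onedr0 y q := h2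
              _ = T p q * (n₀ y q * onedr0 y q) := by ring
          have h3 := integral_mono ((hgnI y p).const_mul m) (hfI y p) hpt
          rw [integral_const_mul] at h3
          have h4 : m * κ ≤ m * ∫ q, |T p q| * n₀ y q :=
            mul_le_mul_of_nonpos_left (hκint y p) (le_of_lt hneg)
          linarith
        have h5 : 1 + m * κ ≤ m := le_ciInf fun z => key z.1 z.2
        nlinarith
      · -- T ≤ 0
        have hTn_nonpos : ∀ p y q, T p q * n₀ y q ≤ 0 := fun p y q =>
          mul_nonpos_of_nonpos_of_nonneg (hTneg p q) (hn_nonneg y q)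
        have hTn_eq : ∀ y p, (∫ q, T p q * n₀ y q) = -∫ q, |T p q| * n₀ y q := by
          intro y p
          rw [← integral_neg]
          congr 1; funext q
          rw [abs_of_nonpos (hTneg p q)]; ring
        have step1 : ∀ y p, onedr0 y p ≤ 1 + (-m) * κ := by
          intro y p
          rw [h1_eq y p]
          have hpt : ∀ q, T p q * (n₀ y q * onedr0 y q) ≤ (|T p q| * n₀ y q) * (-m) := by
            intro q
            have h2 : (T p q * n₀ y q) * onedr0 y q ≤ (T p q * n₀ y q) * m :=
              mul_le_mul_of_nonpos_left (hm_le y q) (hTn_nonpos p y q)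
            calc T p q * (n₀ y q * onedr0 y q) = (T p q * n₀ y q) * onedr0 y q := by ring
              _ ≤ (T p q * n₀ y q) * m := h2
              _ = (|T p q| * n₀ y q) * (-m) := by rw [abs_of_nonpos (hTneg p q)]; ring
          have h3 := integral_mono (hfI y p) ((hgnI y p).mul_const (-m)) hpt
          rw [integral_mul_const] at h3
          have h4 : (∫ q, |T p q| * n₀ y q) * (-m) ≤ κ * (-m) :=
            mul_le_mul_of_nonneg_right (hκint y p) (by linarith)
          linarith
        have step2 : ∀ y p, 1 - (1 + (-m) * κ) * κ ≤ onedr0 y p := by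
          intro y p
          set U : ℝ := 1 + (-m) * κ with hU
          have hU0 : 0 ≤ U := by nlinarith
          rw [h1_eq y p]
          have hpt : ∀ q, (T p q * n₀ y q) * U ≤ T p q * (n₀ y q * onedr0 y q) := by
            intro q
            have h2 : (T p q * n₀ y q) * U ≤ (T p q * n₀ y q) * onedr0 y q :=
              mul_le_mul_of_nonpos_left (step1 y q) (hTn_nonpos p y q)
            calc (T p q * n₀ y q) * U ≤ (T p q * n₀ y q) * onedr0 y q := h2
              _ = T p q * (n₀ y q * onedr0 y q) := by ring
          have h3 := integral_mono ((hTnI y p).mul_const U) (hfI y p) hpt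
          rw [integral_mul_const, hTn_eq y p] at h3
          have h4 : -κ * U ≤ (-∫ q, |T p q| * n₀ y q) * U := by
            have := mul_le_mul_of_nonneg_right (hκint y p) hU0
            nlinarith [hκint y p, hU0]
          linarith
        have h5 : 1 - (1 + (-m) * κ) * κ ≤ m := le_ciInf fun z => step2 z.1 z.2
        have hk2 : (0:ℝ) < 1 - κ^2 := by nlinarith
        have hmn : m * (1 - κ^2) < 0 := mul_neg_of_neg_of_pos hneg hk2
        nlinarith
    -- now m ≥ 0
    intro y p
    rcases hsign with hTpos | hTneg
    · have h6 : 0 ≤ ∫ q, T p q * (n₀ y q * onedr0 y q) :=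
        integral_nonneg fun q => mul_nonneg (hTpos p q)
          (mul_nonneg (hn_nonneg y q) ((hm0.trans (hm_le y q))))
      rw [h1_eq y p]; linarith
    · have hTn_nonpos : ∀ p y q, T p q * n₀ y q ≤ 0 := fun p y q =>
        mul_nonpos_of_nonpos_of_nonneg (hTneg p q) (hn_nonneg y q)
      have hone : ∀ y p, onedr0 y p ≤ 1 := by
        intro y p
        have h6 : (∫ q, T p q * (n₀ y q * onedr0 y q)) ≤ 0 := by
          refine integral_nonpos fun q => ?_
          have : 0 ≤ n₀ y q * onedr0 y q :=
            mul_nonneg (hn_nonneg y q) (hm0.trans (hm_le y q))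
          exact mul_nonpos_of_nonpos_of_nonneg (hTneg p q) this
        rw [h1_eq y p]; linarith
      have hpt : ∀ q, (T p q * n₀ y q) * 1 ≤ T p q * (n₀ y q * onedr0 y q) := by
        intro q
        have h2 : (T p q * n₀ y q) * 1 ≤ (T p q * n₀ y q) * onedr0 y q :=
          mul_le_mul_of_nonpos_left (hone y q) (hTn_nonpos p y q)
        calc (T p q * n₀ y q) * 1 ≤ (T p q * n₀ y q) * onedr0 y q := h2
          _ = T p q * (n₀ y q * onedr0 y q) := by ring
      have h3 := integral_mono ((hTnI y p).mul_const 1) (hfI y p) hpt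
      rw [integral_mul_const] at h3
      have hTn_eq : (∫ q, T p q * n₀ y q) = -∫ q, |T p q| * n₀ y q := by
        rw [← integral_neg]
        congr 1; funext q
        rw [abs_of_nonpos (hTneg p q)]; ring
      rw [hTn_eq] at h3
      rw [h1_eq y p]
      have := hκint y p
      linarith
  -- pointwise bounds with Rκ
  have hRκpos : 0 < Rκ := by
    rcases hR with ⟨_, h, hRe⟩ | ⟨h, hRe⟩
    · rw [hRe]; linarith
    · rw [hRe]; apply div_pos <;> linarith
  have hlow : ∀ y p, Rκ ≤ onedr0 y p := by
    rcases hR with ⟨hsign, h, hRe⟩ | ⟨h, hRe⟩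
    · intro y p; rw [hRe]; exact hfix hsign y p
    · intro y p
      have h1 : -(κ * S) ≤ ∫ q, T p q * (n₀ y q * onedr0 y q) :=
        (abs_le.1 (habsint y p)).1
      have h2 : κ * S ≤ κ * (1 / (1 - κ)) := mul_le_mul_of_nonneg_left hS_bound hκ0
      have hne : (1:ℝ) - κ ≠ 0 := by linarith
      have h3 : Rκ = 1 - κ / (1 - κ) := by
        rw [hRe, eq_sub_iff_add_eq, ← add_div,
          show 1 - 2 * κ + κ = 1 - κ by ring, div_self hne]
      rw [mul_one_div] at h2
      rw [h1_eq y p, h3]; linarith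
  -- interval integrability
  have hII : ∀ p a b, IntervalIntegrable (fun y => onedr0 y p) volume a b := by
    intro p a b
    refine (intervalIntegrable_const (c := C1)).mono_fun
      (h1m' p).aestronglyMeasurable (Filter.Eventually.of_forall fun y => ?_)
    simp only [Real.norm_eq_abs]
    exact (hC1 y p).trans (le_abs_self C1)
  have hdiff : ∀ p x y, Xhat0 x p - Xhat0 y p = ∫ t in y..x, onedr0 t p := by
    intro p x y
    rw [hXhat0, hXhat0]
    exact intervalIntegral.integral_interval_sub_left (hII p 0 x) (hII p 0 y)
  have main : ∀ p x y, y < x →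
      Rκ * (x - y) ≤ Xhat0 x p - Xhat0 y p ∧
      Xhat0 x p - Xhat0 y p ≤ (1 / (1 - κ)) * (x - y) := by
    intro p x y hyx
    rw [hdiff p x y]
    constructor
    · have h1 := intervalIntegral.integral_mono_on (μ := volume) hyx.le
        intervalIntegrable_const (hII p y x) (fun t _ => hlow t p)
      rw [intervalIntegral.integral_const] at h1
      simpa [smul_eq_mul, mul_comm] using h1
    · have h1 := intervalIntegral.integral_mono_on (μ := volume) hyx.le
        (hII p y x) intervalIntegrable_const (fun t _ => hup t p)
      rw [intervalIntegral.integral_const] at h1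
      simpa [smul_eq_mul, mul_comm] using h1
  have hκ1' : (0:ℝ) < 1 - κ := by linarith
  have part1 : ∀ p x y, y < x →
      Rκ ≤ (Xhat0 x p - Xhat0 y p) / (x - y) ∧
      (Xhat0 x p - Xhat0 y p) / (x - y) ≤ 1 / (1 - κ) := by
    intro p x y hyx
    have hd : (0:ℝ) < x - y := by linarith
    obtain ⟨h1, h2⟩ := main p x y hyx
    exact ⟨(le_div_iff₀ hd).2 (by linarith), (div_le_iff₀ hd).2 (by linarith)⟩
  have hsm : ∀ p, StrictMono (fun x => Xhat0 x p) := by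
    intro p a b hab
    have := (main p b a hab).1
    have : 0 < Xhat0 b p - Xhat0 a p := lt_of_lt_of_le (mul_pos hRκpos (by linarith)) this
    simpa using this
  refine ⟨part1, hsm, fun p => ⟨(hX0 p).1.injective, (hX0 p).2.surjective⟩, ?_⟩
  intro p xh yh h
  have hx : Xhat0 (X0 xh p) p = xh := (hX0 p).2 xh
  have hy : Xhat0 (X0 yh p) p = yh := (hX0 p).2 yh
  have hyx : X0 yh p < X0 xh p := by
    refine (hsm p).lt_iff_lt.1 ?_
    show Xhat0 (X0 yh p) p < Xhat0 (X0 xh p) p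
    rw [hx, hy]; exact h
  have hd : (0:ℝ) < X0 xh p - X0 yh p := by linarith
  have hD : (0:ℝ) < xh - yh := by linarith
  obtain ⟨h1, h2⟩ := part1 p (X0 xh p) (X0 yh p) hyx
  rw [hx, hy] at h1 h2
  have h1' : Rκ * (X0 xh p - X0 yh p) ≤ xh - yh := (le_div_iff₀ hd).1 h1
  have h2' : xh - yh ≤ (1 / (1 - κ)) * (X0 xh p - X0 yh p) := (div_le_iff₀ hd).1 h2
  constructor
  · rw [le_div_iff₀ hD]
    have := mul_le_mul_of_nonneg_left h2' hκ1'.le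
    rw [← mul_assoc] at this
    rw [mul_one_div, div_self (ne_of_gt hκ1'), one_mul] at this
    linarith
  · rw [div_le_div_iff₀ hD hRκpos]
    nlinarith
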